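/- Let Q be the Lorentzian form on ℝ^k (signature (1,k-1)), ω with Q(ω,ω)>0, c arbitrary, and define f(t) = (1/2)Q(ω + tc, ω + tc) on the set where f > 0. Then log f is concave there. (This is the abstract form of Theorem 5.1: b⁺=1 for reduced spaces implies log-concavity of the Duistermaat–Heckman function along line segments.) -/

import Mathlib

-- reverse Cauchy-Schwarz for the Lorentzian form
lemma revCS (n : ℕ) (x y : Fin (n + 1) → ℝ)
    (hx : 0 < x 0 * x 0 - ∑ i : Fin n, x i.succ * x i.succ) :
    (x 0 * x 0 - ∑ i : Fin n, x i.succ * x i.succ) *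
      (y 0 * y 0 - ∑ i : Fin n, y i.succ * y i.succ) ≤
    (x 0 * y 0 - ∑ i : Fin n, x i.succ * y i.succ) ^ 2 := by
  set X := ∑ i : Fin n, x i.succ * x i.succ with hX
  set Y := ∑ i : Fin n, y i.succ * y i.succ with hY
  set P := ∑ i : Fin n, x i.succ * y i.succ with hP
  have hXnn : 0 ≤ X := Finset.sum_nonneg fun i _ => mul_self_nonneg _
  have hx0 : x 0 ≠ 0 := by
    intro h; rw [h] at hx; nlinarith
  set s := y 0 / x 0 with hs
  have hy0 : y 0 = s * x 0 := by rw [hs, div_mul_cancel₀ _ hx0]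
  have key : 0 ≤ Y - 2 * s * P + s ^ 2 * X := by
    have h1 : ∑ i : Fin n, (y i.succ - s * x i.succ) ^ 2
        = Y - 2 * s * P + s ^ 2 * X := by
      rw [hY, hP, hX, Finset.mul_sum, Finset.mul_sum, ← Finset.sum_sub_distrib,
        ← Finset.sum_add_distrib]
      exact Finset.sum_congr rfl fun i _ => by ring
    rw [← h1]
    exact Finset.sum_nonneg fun i _ => sq_nonneg _
  have hid : (x 0 * y 0 - P) ^ 2 - (x 0 * x 0 - X) * (y 0 * y 0 - Y)
      = (P - s * X) ^ 2 + (x 0 * x 0 - X) * (Y - 2 * s * P + s ^ 2 * X) := by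
    rw [hy0]; ring
  nlinarith [sq_nonneg (P - s * X), mul_nonneg hx.le key]

-- bilinear expansion
lemma expandQ (n : ℕ) (x y : Fin (n + 1) → ℝ) (t u : ℝ) :
    ((x 0 + t * y 0) * (x 0 + u * y 0)
      - ∑ i : Fin n, (x i.succ + t * y i.succ) * (x i.succ + u * y i.succ))
    = (x 0 * x 0 - ∑ i : Fin n, x i.succ * x i.succ)
      + (t + u) * (x 0 * y 0 - ∑ i : Fin n, x i.succ * y i.succ)
      + t * u * (y 0 * y 0 - ∑ i : Fin n, y i.succ * y i.succ) := by
  have h1 : ∑ i : Fin n, (x i.succ + t * y i.succ) * (x i.succ + u * y i.succ)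
      = (∑ i : Fin n, x i.succ * x i.succ)
        + (t + u) * ∑ i : Fin n, x i.succ * y i.succ
        + t * u * ∑ i : Fin n, y i.succ * y i.succ := by
    rw [Finset.mul_sum, Finset.mul_sum, ← Finset.sum_add_distrib, ← Finset.sum_add_distrib]
    exact Finset.sum_congr rfl fun i _ => by ring
  rw [h1]; ring

lemma expandQ2 (n : ℕ) (x y : Fin (n + 1) → ℝ) (t : ℝ) :
    ((x 0 + t * y 0) * y 0 - ∑ i : Fin n, (x i.succ + t * y i.succ) * y i.succ)
    = (x 0 * y 0 - ∑ i : Fin n, x i.succ * y i.succ)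
      + t * (y 0 * y 0 - ∑ i : Fin n, y i.succ * y i.succ) := by
  have h1 : ∑ i : Fin n, (x i.succ + t * y i.succ) * y i.succ
      = (∑ i : Fin n, x i.succ * y i.succ) + t * ∑ i : Fin n, y i.succ * y i.succ := by
    rw [Finset.mul_sum, ← Finset.sum_add_distrib]
    exact Finset.sum_congr rfl fun i _ => by ring
  rw [h1]; ring

theorem stmt_16 (n : ℕ)
    (Q : (Fin (n + 1) → ℝ) → (Fin (n + 1) → ℝ) → ℝ)
    (hQ : Q = fun x y => x 0 * y 0 - ∑ i : Fin n, x i.succ * y i.succ)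
    (ω c : Fin (n + 1) → ℝ) (hω : 0 < Q ω ω)
    (f : ℝ → ℝ) (hf : f = fun t => (1 / 2) * Q (ω + t • c) (ω + t • c))
    (a b : ℝ) (hpos : ∀ t ∈ Set.Ioo a b, 0 < f t) :
    (∀ t ∈ Set.Ioo a b, deriv (deriv f) t * f t - (deriv f t) ^ 2 ≤ 0) ∧
    ConcaveOn ℝ (Set.Ioo a b) (fun t => Real.log (f t)) := by
  subst hQ
  set A : ℝ := (1 / 2) * (ω 0 * ω 0 - ∑ i : Fin n, ω i.succ * ω i.succ) with hA
  set B : ℝ := ω 0 * c 0 - ∑ i : Fin n, ω i.succ * c i.succ with hB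
  set C : ℝ := (1 / 2) * (c 0 * c 0 - ∑ i : Fin n, c i.succ * c i.succ) with hC
  have hfe : f = fun t => A + B * t + C * t ^ 2 := by
    rw [hf]
    funext t
    have h := expandQ n ω c t t
    simp only [Pi.add_apply, Pi.smul_apply, smul_eq_mul]
    rw [h, hA, hB, hC]; ring
  -- derivatives of f
  have hd1 : ∀ t : ℝ, HasDerivAt f (B + 2 * C * t) t := by
    intro t
    rw [hfe]
    have h1 : HasDerivAt (fun t : ℝ => A + B * t + C * t ^ 2)
        (0 + B * 1 + C * ((2 : ℕ) * t ^ 1)) t :=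
      ((hasDerivAt_const t A).add ((hasDerivAt_id t).const_mul B)).add
        ((hasDerivAt_pow 2 t).const_mul C)
    convert h1 using 1; push_cast; ring
  have hderiv : deriv f = fun t => B + 2 * C * t := funext fun t => (hd1 t).deriv
  have hd2 : ∀ t : ℝ, HasDerivAt (deriv f) (2 * C) t := by
    intro t
    rw [hderiv]
    simpa using ((hasDerivAt_id t).const_mul (2 * C)).const_add B
  have hderiv2 : deriv (deriv f) = fun _ => 2 * C := funext fun t => (hd2 t).deriv
  -- key inequality
  have hkey : ∀ t ∈ Set.Ioo a b, 2 * C * f t - (B + 2 * C * t) ^ 2 ≤ 0 := by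
    intro t ht
    have hft : 0 < f t := hpos t ht
    set x : Fin (n + 1) → ℝ := ω + t • c with hx
    have hxj : ∀ j, x j = ω j + t * c j := fun j => rfl
    have hQxx : x 0 * x 0 - ∑ i : Fin n, x i.succ * x i.succ = 2 * f t := by
      simp only [hxj]
      rw [expandQ n ω c t t, hfe, hA, hB, hC]
      ring
    have hQxc : x 0 * c 0 - ∑ i : Fin n, x i.succ * c i.succ = B + 2 * C * t := by
      simp only [hxj]
      rw [expandQ2 n ω c t, hB, hC]; ring
    have hQcc : c 0 * c 0 - ∑ i : Fin n, c i.succ * c i.succ = 2 * C := by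
      rw [hC]; ring
    have hpos' : 0 < x 0 * x 0 - ∑ i : Fin n, x i.succ * x i.succ := by
      rw [hQxx]; linarith
    have := revCS n x c hpos'
    rw [hQxx, hQxc, hQcc] at this
    nlinarith [hft]
  refine ⟨fun t ht => by rw [hderiv2, hderiv]; simpa using hkey t ht, ?_⟩
  -- concavity of log ∘ f
  have hint : interior (Set.Ioo a b) = Set.Ioo a b := interior_Ioo
  refine concaveOn_of_hasDerivWithinAt2_nonpos (convex_Ioo a b)
    (f' := fun t => (B + 2 * C * t) / f t)
    (f'' := fun t => (2 * C * f t - (B + 2 * C * t) * (B + 2 * C * t)) / (f t) ^ 2)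
    ?_ ?_ ?_ ?_
  · have hfc : Continuous f := by rw [hfe]; continuity
    exact ContinuousOn.log hfc.continuousOn fun t ht => (hpos t ht).ne'
  · rw [hint]
    intro t ht
    exact (((hd1 t).log (hpos t ht).ne')).hasDerivWithinAt
  · rw [hint]
    intro t ht
    have hft : f t ≠ 0 := (hpos t ht).ne'
    have hnum : HasDerivAt (fun t => B + 2 * C * t) (2 * C) t := by
      simpa using ((hasDerivAt_id t).const_mul (2 * C)).const_add B
    exact ((hnum.div (hd1 t) hft)).hasDerivWithinAt
  · rw [hint]
    intro t ht
    have hft : 0 < f t := hpos t ht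
    apply div_nonpos_of_nonpos_of_nonneg
    · nlinarith [hkey t ht]
    · positivity
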